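/- If the strata are the preimages under the Hilbert curve map of q consecutive subintervals of [0,1] of length 1/q each, then by the Hölder property of the Hilbert curve each stratum has diameter at most 2√(d+3)·q^{−1/d}, and consequently the stratified estimator of ∫ g f_X for an M-Lipschitz g with equal stratum weights w_j = 1/q has variance at most 4(d+3)M²·q^{−1−2/d}. -/

import Mathlib

open MeasureTheory Set

section Aux

variable {d q : ℕ}

/-- Fubini for a product of one-variable functions over `Measure.pi P`. -/
lemma pi_fubini {E : Type*} [MeasurableSpace E] (P : Fin q → Measure E)
    [∀ j, IsProbabilityMeasure (P j)] (f : Fin q → E → ℝ) :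
    ∫ x : Fin q → E, ∏ i, f i (x i) ∂(Measure.pi P) = ∏ i, ∫ x, f i x ∂(P i) :=
  MeasureTheory.integral_fintype_prod_eq_prod (E := fun _ => E) f (μ := P)

lemma pi_integrable_prod {E : Type*} [MeasurableSpace E] (P : Fin q → Measure E)
    [∀ j, IsProbabilityMeasure (P j)] (f : Fin q → E → ℝ)
    (hf : ∀ i, Integrable (f i) (P i)) :
    Integrable (fun x : Fin q → E => ∏ i, f i (x i)) (Measure.pi P) :=
  MeasureTheory.Integrable.fintype_prod_dep (E := fun _ => E) (f := f) (μ := P) hf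

/-- Integral of a single-coordinate function over a product of probability measures. -/
lemma pi_integral_eval {E : Type*} [MeasurableSpace E] (P : Fin q → Measure E)
    [∀ j, IsProbabilityMeasure (P j)] (f : E → ℝ) (j : Fin q) :
    ∫ x : Fin q → E, f (x j) ∂(Measure.pi P) = ∫ x, f x ∂(P j) := by
  classical
  have h := pi_fubini P (fun i => if i = j then f else fun _ => 1)
  have h1 : (fun x : Fin q → E => ∏ i, (if i = j then f else fun _ => 1) (x i))
      = fun x : Fin q → E => f (x j) := by
    funext x
    have : ∀ i : Fin q, (if i = j then f else fun _ => 1) (x i)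
        = if i = j then f (x i) else 1 := by
      intro i; by_cases hi : i = j <;> simp [hi]
    simp [this]
  rw [h1] at h
  rw [h]
  have h2 : ∀ i : Fin q, ∫ x, (if i = j then f else fun _ => 1) x ∂(P i)
      = if i = j then ∫ x, f x ∂(P j) else 1 := by
    intro i; by_cases hi : i = j <;> simp [hi]
  simp [h2]

/-- Integrability of a single-coordinate function over a product of probability measures. -/
lemma pi_integrable_eval {E : Type*} [MeasurableSpace E] (P : Fin q → Measure E)
    [∀ j, IsProbabilityMeasure (P j)] (f : E → ℝ) (j : Fin q)
    (hf : Integrable f (P j)) :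
    Integrable (fun x : Fin q → E => f (x j)) (Measure.pi P) := by
  classical
  have h := pi_integrable_prod P (fun i => if i = j then f else fun _ => 1) ?_
  · have h1 : (fun x : Fin q → E => ∏ i, (if i = j then f else fun _ => 1) (x i))
        = fun x : Fin q → E => f (x j) := by
      funext x
      have : ∀ i : Fin q, (if i = j then f else fun _ => 1) (x i)
          = if i = j then f (x i) else 1 := by
        intro i; by_cases hi : i = j <;> simp [hi]
      simp [this]
    rwa [h1] at h
  · intro i; by_cases hi : i = j
    · subst hi; simpa using hf
    · simpa [hi] using (integrable_const (1:ℝ) (μ := P i))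

/-- Cross-term factorization over a product of probability measures. -/
lemma pi_integral_eval_mul_eval {E : Type*} [MeasurableSpace E] (P : Fin q → Measure E)
    [∀ j, IsProbabilityMeasure (P j)] (f₁ f₂ : E → ℝ) {j k : Fin q} (hjk : j ≠ k) :
    ∫ x : Fin q → E, f₁ (x j) * f₂ (x k) ∂(Measure.pi P)
      = (∫ x, f₁ x ∂(P j)) * (∫ x, f₂ x ∂(P k)) := by
  classical
  set c : Fin q → E → ℝ :=
    fun i y => (if i = j then f₁ y else 1) * (if i = k then f₂ y else 1) with hc
  have h := pi_fubini P c
  have h1 : (fun x : Fin q → E => ∏ i, c i (x i))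
      = fun x : Fin q → E => f₁ (x j) * f₂ (x k) := by
    funext x
    rw [show (∏ i, c i (x i))
        = (∏ i, (if i = j then f₁ (x i) else 1)) * ∏ i, (if i = k then f₂ (x i) else 1) from
      Finset.prod_mul_distrib]
    simp
  rw [h1] at h
  rw [h]
  have h2 : ∀ i : Fin q, ∫ y, c i y ∂(P i)
      = if i = j then ∫ y, f₁ y ∂(P j) else if i = k then ∫ y, f₂ y ∂(P k) else 1 := by
    intro i
    by_cases hij : i = j
    · subst hij; simp [hc, hjk]
    · by_cases hik : i = k
      · subst hik; simp [hc, hij]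
      · simp [hc, hij, hik]
  rw [Finset.prod_congr rfl fun i _ => h2 i]
  rw [← Finset.prod_subset (Finset.subset_univ ({j, k} : Finset (Fin q)))
    (fun i _ hi => by
      simp only [Finset.mem_insert, Finset.mem_singleton, not_or] at hi
      simp [hi.1, hi.2])]
  rw [Finset.prod_pair hjk]
  simp [hjk, hjk.symm]

/-- Integrability of a product of two single-coordinate functions (distinct coordinates). -/
lemma pi_integrable_eval_mul_eval {E : Type*} [MeasurableSpace E] (P : Fin q → Measure E)
    [∀ j, IsProbabilityMeasure (P j)] (f₁ f₂ : E → ℝ) {j k : Fin q} (hjk : j ≠ k)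
    (hf₁ : Integrable f₁ (P j)) (hf₂ : Integrable f₂ (P k)) :
    Integrable (fun x : Fin q → E => f₁ (x j) * f₂ (x k)) (Measure.pi P) := by
  classical
  set c : Fin q → E → ℝ :=
    fun i y => (if i = j then f₁ y else 1) * (if i = k then f₂ y else 1) with hc
  have h := pi_integrable_prod P c ?_
  · have h1 : (fun x : Fin q → E => ∏ i, c i (x i))
        = fun x : Fin q → E => f₁ (x j) * f₂ (x k) := by
      funext x
      rw [show (∏ i, c i (x i))
          = (∏ i, (if i = j then f₁ (x i) else 1)) * ∏ i, (if i = k then f₂ (x i) else 1) from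
        Finset.prod_mul_distrib]
      simp
    rwa [h1] at h
  · intro i
    by_cases hij : i = j
    · subst hij; simpa [hc, hjk] using hf₁
    · by_cases hik : i = k
      · subst hik; simpa [hc, hij] using hf₂
      · simpa [hc, hij, hik] using (integrable_const (1:ℝ) (μ := P i))

end Aux

/-- Hilbert-curve strata: if the strata are images under the Hilbert curve `H` (satisfying
the Hölder bound with constant `2√(d+3)`) of `q` consecutive subintervals of `[0,1]` of
length `1/q`, each of `f_X`-probability `1/q`, then each stratum has diameter at most
`2√(d+3) q^(-1/d)`, and the stratified estimator `(1/q) ∑ j g(x_j*)` of `∫ g f_X` for an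
`M`-Lipschitz `g` has variance at most `4(d+3) M² q^(-1-2/d)`. -/
theorem hilbert_strata_diam_and_variance (d q : ℕ) (hd : 1 ≤ d) (hq : 1 ≤ q)
    (H : ℝ → EuclideanSpace ℝ (Fin d))
    (hH : ∀ x ∈ Icc (0:ℝ) 1, ∀ y ∈ Icc (0:ℝ) 1,
      ‖H x - H y‖ ≤ 2 * Real.sqrt ((d : ℝ) + 3) * |x - y| ^ ((1:ℝ) / d))
    (A : Fin q → Set (EuclideanSpace ℝ (Fin d)))
    (hA : ∀ j, A j = H '' Icc ((j : ℝ) / q) (((j : ℝ) + 1) / q))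
    (μ : Measure (EuclideanSpace ℝ (Fin d))) [IsProbabilityMeasure μ]
    (hprob : ∀ j, μ (A j) = (q : ENNReal)⁻¹)
    (P : Fin q → Measure (EuclideanSpace ℝ (Fin d))) [∀ j, IsProbabilityMeasure (P j)]
    (hP : ∀ j, P j = (μ (A j))⁻¹ • μ.restrict (A j))
    (M : ℝ) (hM : 0 ≤ M)
    (g : EuclideanSpace ℝ (Fin d) → ℝ)
    (hg : ∀ x y, |g x - g y| ≤ M * ‖x - y‖) :
    (∀ j, Metric.diam (A j) ≤ 2 * Real.sqrt ((d : ℝ) + 3) * (q : ℝ) ^ (-(1:ℝ) / d)) ∧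
    (∫ xs, ((1 / (q:ℝ)) * ∑ j : Fin q, g (xs j)
        - ∫ ys, (1 / (q:ℝ)) * ∑ j : Fin q, g (ys j) ∂(Measure.pi P)) ^ 2
      ∂(Measure.pi P)
      ≤ 4 * ((d : ℝ) + 3) * M ^ 2 * (q : ℝ) ^ (-1 - 2 / (d : ℝ))) := by
  classical
  have hq0 : (0:ℝ) < q := by exact_mod_cast hq
  have hd0 : (0:ℝ) < d := by exact_mod_cast hd
  have hr : (0:ℝ) ≤ 1 / d := by positivity
  set c2 : ℝ := 2 * Real.sqrt ((d:ℝ) + 3) with hc2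
  have hc2nn : (0:ℝ) ≤ c2 := by positivity
  set D : ℝ := c2 * (q : ℝ) ^ (-(1:ℝ) / d) with hDdef
  have hDnn : (0:ℝ) ≤ D := by positivity
  -- all subintervals lie in [0,1]
  have hsub : ∀ j : Fin q, Icc ((j:ℝ)/q) (((j:ℝ)+1)/q) ⊆ Icc (0:ℝ) 1 := by
    intro j
    apply Icc_subset_Icc
    · positivity
    · rw [div_le_one hq0]
      have : ((j:ℕ):ℝ) + 1 ≤ (q:ℝ) := by exact_mod_cast Nat.succ_le_of_lt j.isLt
      exact this
  -- diameter bound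
  have hdiam : ∀ j, Metric.diam (A j) ≤ D := by
    intro j
    rw [hA j]
    apply Metric.diam_le_of_forall_dist_le hDnn
    rintro x ⟨a, ha, rfl⟩ y ⟨b, hb, rfl⟩
    have h1 : dist (H a) (H b) ≤ c2 * |a - b| ^ ((1:ℝ)/d) := by
      rw [dist_eq_norm]; exact hH a (hsub j ha) b (hsub j hb)
    have key : ((j:ℝ)+1)/q - (j:ℝ)/q = (q:ℝ)⁻¹ := by field_simp; ring
    have h2 : |a - b| ≤ (q:ℝ)⁻¹ := by
      rw [abs_sub_le_iff]
      constructor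
      · have := ha.2; have := hb.1; linarith
      · have := hb.2; have := ha.1; linarith
    have h3 : |a - b| ^ ((1:ℝ)/d) ≤ ((q:ℝ)⁻¹) ^ ((1:ℝ)/d) :=
      Real.rpow_le_rpow (abs_nonneg _) h2 hr
    have h4 : ((q:ℝ)⁻¹) ^ ((1:ℝ)/d) = (q:ℝ) ^ (-(1:ℝ)/d) := by
      rw [Real.inv_rpow hq0.le, ← Real.rpow_neg hq0.le, neg_div]
    calc dist (H a) (H b) ≤ c2 * |a - b| ^ ((1:ℝ)/d) := h1
      _ ≤ c2 * ((q:ℝ)⁻¹) ^ ((1:ℝ)/d) := by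
          exact mul_le_mul_of_nonneg_left h3 hc2nn
      _ = D := by rw [h4]
  refine ⟨hdiam, ?_⟩
  -- continuity of H on [0,1]
  have hHcont : ContinuousOn H (Icc (0:ℝ) 1) := by
    intro x hx
    have habs : Filter.Tendsto (fun y : ℝ => |y - x|) (nhdsWithin x (Icc (0:ℝ) 1)) (nhds 0) := by
      have hcont : Continuous fun y : ℝ => |y - x| := by continuity
      have := (hcont.tendsto x).mono_left (nhdsWithin_le_nhds (s := Icc (0:ℝ) 1))
      simpa using this
    have hpow : Filter.Tendsto (fun y : ℝ => c2 * |y - x| ^ ((1:ℝ)/d))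
        (nhdsWithin x (Icc (0:ℝ) 1)) (nhds 0) := by
      have h0 : ContinuousAt (fun t : ℝ => t ^ ((1:ℝ)/d)) 0 :=
        Real.continuousAt_rpow_const 0 _ (Or.inr hr)
      have hcomp := (h0.tendsto).comp habs
      rw [Real.zero_rpow (by positivity : (1:ℝ)/d ≠ 0)] at hcomp
      have := hcomp.const_mul c2
      simpa using this
    have hdist : Filter.Tendsto (fun y => dist (H y) (H x))
        (nhdsWithin x (Icc (0:ℝ) 1)) (nhds 0) := by
      apply squeeze_zero' (Filter.Eventually.of_forall fun y => dist_nonneg) ?_ hpow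
      filter_upwards [self_mem_nhdsWithin] with y hy
      rw [dist_eq_norm]; exact hH y hy x hx
    exact tendsto_iff_dist_tendsto_zero.2 hdist
  have hAcomp : ∀ j, IsCompact (A j) := by
    intro j
    rw [hA j]
    exact isCompact_Icc.image_of_continuousOn (hHcont.mono (hsub j))
  have hAmeas : ∀ j, MeasurableSet (A j) := fun j => (hAcomp j).measurableSet
  have hAne : ∀ j, (A j).Nonempty := by
    intro j
    rw [hA j]
    refine (Set.nonempty_Icc.2 ?_).image _
    gcongr
    linarith
  -- g is Lipschitz, hence continuous
  have hgL : LipschitzWith (Real.toNNReal M) g := by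
    apply LipschitzWith.of_dist_le_mul
    intro x y
    rw [Real.dist_eq, Real.coe_toNNReal M hM, dist_eq_norm]
    exact hg x y
  have hgc : Continuous g := hgL.continuous
  -- a.e. membership in the stratum
  have haeP : ∀ j, ∀ᵐ x ∂(P j), x ∈ A j := by
    intro j
    rw [hP j]
    exact Measure.ae_smul_measure (ae_restrict_mem (hAmeas j)) _
  -- integrability of g w.r.t. each P j
  have hints : ∀ j, Integrable g (P j) := by
    intro j
    rw [hP j, hprob j, inv_inv]
    have h1 : IntegrableOn g (A j) μ := hgc.continuousOn.integrableOn_compact (hAcomp j)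
    exact h1.smul_measure (ENNReal.natCast_ne_top q)
  -- oscillation bound on each stratum
  have hosc : ∀ j, ∀ x ∈ A j, ∀ y ∈ A j, |g x - g y| ≤ M * D := by
    intro j x hx y hy
    calc |g x - g y| ≤ M * ‖x - y‖ := hg x y
      _ = M * dist x y := by rw [dist_eq_norm]
      _ ≤ M * D := by
          apply mul_le_mul_of_nonneg_left _ hM
          exact (Metric.dist_le_diam_of_mem (hAcomp j).isBounded hx hy).trans (hdiam j)
  set t : Fin q → ℝ := fun j => ∫ x, g x ∂(P j) with ht
  -- deviation from the stratum mean
  have hmean : ∀ j, ∀ x ∈ A j, |g x - t j| ≤ M * D := by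
    intro j x hx
    have heq : g x - t j = ∫ y, (g x - g y) ∂(P j) := by
      rw [integral_sub (integrable_const _) (hints j), integral_const]
      simp
      rfl
    rw [heq]
    have hb := norm_integral_le_of_norm_le_const (μ := P j) (C := M * D)
      (f := fun y => g x - g y) ?_
    · simpa using hb
    · filter_upwards [haeP j] with y hy
      rw [Real.norm_eq_abs]
      exact hosc j x hx y hy
  set h : Fin q → EuclideanSpace ℝ (Fin d) → ℝ := fun j x => g x - t j with hh
  have haeh : ∀ j, ∀ᵐ x ∂(P j), |h j x| ≤ M * D :=
    fun j => (haeP j).mono fun x hx => hmean j x hx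
  have hinth : ∀ j, Integrable (h j) (P j) := fun j => (hints j).sub (integrable_const _)
  have hinth0 : ∀ j, ∫ x, h j x ∂(P j) = 0 := by
    intro j
    rw [hh]
    simp only
    rw [integral_sub (hints j) (integrable_const _), integral_const]
    simp [ht]
  have hinthsq : ∀ j, Integrable (fun x => h j x * h j x) (P j) := by
    intro j
    refine (integrable_const ((M*D)*(M*D))).mono' ?_ ?_
    · exact ((hgc.sub continuous_const).mul (hgc.sub continuous_const)).aestronglyMeasurable
    · filter_upwards [haeh j] with x hx
      rw [Real.norm_eq_abs, abs_mul]
      exact mul_le_mul hx hx (abs_nonneg _) (le_trans (abs_nonneg _) hx)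
  have hinthsqle : ∀ j, ∫ x, h j x * h j x ∂(P j) ≤ (M*D)*(M*D) := by
    intro j
    have := integral_mono_of_nonneg (μ := P j)
      (f := fun x => h j x * h j x) (g := fun _ => (M*D)*(M*D))
      (Filter.Eventually.of_forall fun x => mul_self_nonneg _)
      (integrable_const _)
      ((haeh j).mono fun x hx => by
        show h j x * h j x ≤ (M*D)*(M*D)
        calc h j x * h j x = |h j x| * |h j x| := (abs_mul_abs_self _).symm
          _ ≤ (M*D)*(M*D) := mul_le_mul hx hx (abs_nonneg _) (le_trans (abs_nonneg _) hx))
    simpa using this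
  -- the inner integral equals the average of the stratum means
  have hinner : ∫ ys, (1/(q:ℝ)) * ∑ j : Fin q, g (ys j) ∂(Measure.pi P)
      = (1/(q:ℝ)) * ∑ j : Fin q, t j := by
    rw [integral_const_mul]
    congr 1
    rw [integral_finset_sum Finset.univ
      (fun j _ => pi_integrable_eval P g j (hints j))]
    exact Finset.sum_congr rfl fun j _ => pi_integral_eval P g j
  rw [hinner]
  -- expand the square
  have expand : ∀ xs : Fin q → EuclideanSpace ℝ (Fin d),
      ((1/(q:ℝ)) * ∑ j : Fin q, g (xs j) - (1/(q:ℝ)) * ∑ j : Fin q, t j) ^ 2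
      = (1/(q:ℝ))^2 * ∑ j : Fin q, ∑ k : Fin q, h j (xs j) * h k (xs k) := by
    intro xs
    rw [← mul_sub, ← Finset.sum_sub_distrib, mul_pow]
    congr 1
    rw [sq, Finset.sum_mul_sum]
  simp only [expand]
  -- integrability of each term in the double sum
  have hterm : ∀ j k : Fin q,
      Integrable (fun xs : Fin q → EuclideanSpace ℝ (Fin d) => h j (xs j) * h k (xs k))
        (Measure.pi P) := by
    intro j k
    by_cases hjk : j = k
    · subst hjk
      exact pi_integrable_eval P (fun y => h j y * h j y) j (hinthsq j)
    · exact pi_integrable_eval_mul_eval P (h j) (h k) hjk (hinth j) (hinth k)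
  have hval : ∀ j k : Fin q,
      ∫ xs : Fin q → EuclideanSpace ℝ (Fin d), h j (xs j) * h k (xs k) ∂(Measure.pi P)
      = if j = k then ∫ x, h j x * h j x ∂(P j) else 0 := by
    intro j k
    by_cases hjk : j = k
    · subst hjk
      simp only [if_pos rfl]
      exact pi_integral_eval P (fun y => h j y * h j y) j
    · rw [if_neg hjk, pi_integral_eval_mul_eval P (h j) (h k) hjk, hinth0 j, zero_mul]
  -- compute the integral of the expansion
  have hsumint : ∫ xs : Fin q → EuclideanSpace ℝ (Fin d),
      (1/(q:ℝ))^2 * ∑ j : Fin q, ∑ k : Fin q, h j (xs j) * h k (xs k) ∂(Measure.pi P)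
      = (1/(q:ℝ))^2 * ∑ j : Fin q, ∫ x, h j x * h j x ∂(P j) := by
    rw [integral_const_mul]
    congr 1
    rw [integral_finset_sum Finset.univ
      (fun j _ => integrable_finset_sum Finset.univ (fun k _ => hterm j k))]
    refine Finset.sum_congr rfl fun j _ => ?_
    rw [integral_finset_sum Finset.univ (fun k _ => hterm j k)]
    rw [Finset.sum_congr rfl fun k _ => hval j k]
    simp
  rw [hsumint]
  -- final numerical bound
  have hbd : (1/(q:ℝ))^2 * ∑ j : Fin q, ∫ x, h j x * h j x ∂(P j)
      ≤ (1/(q:ℝ))^2 * ((q:ℝ) * ((M*D)*(M*D))) := by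
    apply mul_le_mul_of_nonneg_left _ (by positivity)
    calc ∑ j : Fin q, ∫ x, h j x * h j x ∂(P j)
        ≤ ∑ _j : Fin q, (M*D)*(M*D) := Finset.sum_le_sum fun j _ => hinthsqle j
      _ = (q:ℝ) * ((M*D)*(M*D)) := by simp [mul_comm]
  refine hbd.trans ?_
  -- arithmetic: (1/q)² q (MD)² = 4(d+3) M² q^{-1-2/d}
  have hsq : Real.sqrt ((d:ℝ)+3) * Real.sqrt ((d:ℝ)+3) = (d:ℝ)+3 :=
    Real.mul_self_sqrt (by positivity)
  have hqr : (q:ℝ) ^ (-(1:ℝ)/d) * (q:ℝ) ^ (-(1:ℝ)/d) = (q:ℝ) ^ (-(2:ℝ)/d) := by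
    rw [← Real.rpow_add hq0]
    ring_nf
  have hqexp : (q:ℝ) ^ (-1 - 2/(d:ℝ)) = (q:ℝ)⁻¹ * (q:ℝ) ^ (-(2:ℝ)/d) := by
    rw [show (-1 - 2/(d:ℝ)) = (-1) + (-(2:ℝ)/d) by ring, Real.rpow_add hq0,
      Real.rpow_neg_one]
  have hDD : D * D = 4 * ((d:ℝ)+3) * (q:ℝ) ^ (-(2:ℝ)/d) := by
    rw [hDdef, hc2]
    calc (2 * Real.sqrt ((d:ℝ)+3) * (q:ℝ) ^ (-(1:ℝ)/d))
          * (2 * Real.sqrt ((d:ℝ)+3) * (q:ℝ) ^ (-(1:ℝ)/d))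
        = 4 * (Real.sqrt ((d:ℝ)+3) * Real.sqrt ((d:ℝ)+3))
            * ((q:ℝ) ^ (-(1:ℝ)/d) * (q:ℝ) ^ (-(1:ℝ)/d)) := by ring
      _ = 4 * ((d:ℝ)+3) * (q:ℝ) ^ (-(2:ℝ)/d) := by rw [hsq, hqr]
  have h1 : (1/(q:ℝ))^2 * (q:ℝ) = (q:ℝ)⁻¹ := by
    rw [one_div, sq, mul_assoc, inv_mul_cancel₀ hq0.ne', mul_one]
  have final : (1/(q:ℝ))^2 * ((q:ℝ) * ((M*D)*(M*D)))
      = 4 * ((d:ℝ)+3) * M^2 * ((q:ℝ)⁻¹ * (q:ℝ) ^ (-(2:ℝ)/d)) := by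
    calc (1/(q:ℝ))^2 * ((q:ℝ) * ((M*D)*(M*D)))
        = ((1/(q:ℝ))^2 * (q:ℝ)) * (M*M) * (D*D) := by ring
      _ = (q:ℝ)⁻¹ * (M*M) * (4 * ((d:ℝ)+3) * (q:ℝ) ^ (-(2:ℝ)/d)) := by rw [h1, hDD]
      _ = 4 * ((d:ℝ)+3) * M^2 * ((q:ℝ)⁻¹ * (q:ℝ) ^ (-(2:ℝ)/d)) := by ring
  rw [hqexp]
  exact le_of_eq final
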